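/- With notation as above, setting γ = 0 and δ = 1/α in the congruence Σᵢ zᵢ α^{mᵢ} γ^{q−mᵢ} β^{lᵢ} δ^{p−lᵢ} = α^t β^w + (αδ−βγ−1)F shows: any monomial α^t β^w in the image of φ* satisfies t = q − p + w with 0 ≤ w ≤ p. In particular α^q β^p is in the image (being φ*(x₁^q y₁^p)) and achieves the maximal ratio w/t = p/q. -/

import Mathlib

open MvPolynomial
open scoped BigOperators

/-- Setting `γ = 0`, `δ = 1/α` in the congruence shows: any monomial `α^t β^w`
in the image of `φ*` satisfies `t = q − p + w` with `0 ≤ w ≤ p`.  In particular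
`α^q β^p` is in the image (being `φ*(x₁^q y₁^p) = α^q γ^0 β^p δ^0`) and achieves
the maximal ratio `w/t = p/q`. -/
theorem stmt8 (K : Type*) [Field K] [IsAlgClosed K] [CharZero K]
    (p q : ℕ) (hp : 1 ≤ p) (hpq : p < q) (hcop : Nat.Coprime p q)
    (N : ℕ) (z : Fin N → K) (m l : Fin N → ℕ)
    (hm : ∀ i, m i ≤ q) (hl : ∀ i, l i ≤ p) (hz : ∃ i, z i ≠ 0)
    (t w : ℕ)
    (h : (∑ i, C (z i) * X 0 ^ m i * X 2 ^ (q - m i) * X 1 ^ l i * X 3 ^ (p - l i))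
          - X 0 ^ t * X 1 ^ w
        ∈ Ideal.span {(X 0 * X 3 - X 1 * X 2 - 1 : MvPolynomial (Fin 4) K)}) :
    (t = q - p + w ∧ w ≤ p) ∧
    (X 0 ^ q * X 2 ^ (q - q) * X 1 ^ p * X 3 ^ (p - p)
        = (X 0 ^ q * X 1 ^ p : MvPolynomial (Fin 4) K)) ∧
    ((p : ℚ) / ((q : ℚ) - p + p) = (p : ℚ) / q) := by
  refine ⟨?_, by simp, by norm_num⟩
  set R := MvPolynomial (Fin 2) K
  set L := FractionRing R
  set A : R →+* L := algebraMap R L with hA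
  have hAinj : Function.Injective A := IsFractionRing.injective R L
  set a : L := A (X 0) with ha_def
  set b : L := A (X 1) with hb_def
  have ha : a ≠ 0 := by
    simp only [ha_def]
    intro hh
    exact (X_ne_zero (R := K) (0 : Fin 2)) (hAinj (by simpa using hh))
  set f : Fin 4 → L := ![a, b, 0, a⁻¹] with hf
  set ψ : MvPolynomial (Fin 4) K →+* L := eval₂Hom (A.comp (C : K →+* R)) f with hψ
  -- ψ kills the relation
  have hrel : ψ (X 0 * X 3 - X 1 * X 2 - 1) = 0 := by
    simp only [hψ, map_sub, map_mul, map_one, eval₂Hom_X', hf]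
    simp [mul_inv_cancel₀ ha]
  -- hence ψ of the two sides agree
  obtain ⟨c, hc⟩ := Ideal.mem_span_singleton.mp h
  have hEq : ψ (∑ i, C (z i) * X 0 ^ m i * X 2 ^ (q - m i) * X 1 ^ l i * X 3 ^ (p - l i))
      = ψ (X 0 ^ t * X 1 ^ w) := by
    have h2 : ψ ((∑ i, C (z i) * X 0 ^ m i * X 2 ^ (q - m i) * X 1 ^ l i * X 3 ^ (p - l i))
        - X 0 ^ t * X 1 ^ w) = 0 := by
      rw [hc, map_mul, hrel, zero_mul]
    rw [map_sub] at h2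
    exact sub_eq_zero.mp h2
  have hEq2 : (∑ i, A (C (z i)) * a ^ (m i) * (0:L) ^ (q - m i) * b ^ (l i)
        * a⁻¹ ^ (p - l i)) * a ^ p = a ^ t * b ^ w * a ^ p := by
    have hL : ψ (∑ i, C (z i) * X 0 ^ m i * X 2 ^ (q - m i) * X 1 ^ l i * X 3 ^ (p - l i))
        = ∑ i, A (C (z i)) * a ^ (m i) * (0:L) ^ (q - m i) * b ^ (l i) * a⁻¹ ^ (p - l i) := by
      rw [map_sum]
      refine Finset.sum_congr rfl fun i _ => ?_
      simp only [hψ, map_mul, map_pow, eval₂Hom_X', hf, eval₂Hom_C]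
      simp only [show (![a, b, 0, a⁻¹] : Fin 4 → L) 2 = 0 from rfl, show (![a, b, 0, a⁻¹] : Fin 4 → L) 3 = a⁻¹ from rfl]
      norm_num
    have hR : ψ (X 0 ^ t * X 1 ^ w) = a ^ t * b ^ w := by
      simp only [hψ, map_mul, map_pow, eval₂Hom_X', hf]
      norm_num
    rw [← hL, ← hR, hEq]
  -- clear the inverses
  set P : R := ∑ i, C (z i) * X 0 ^ (m i + l i) * (0:R) ^ (q - m i) * X 1 ^ (l i) with hP
  set Q : R := X 0 ^ (t + p) * X 1 ^ w with hQ
  have hPQ : P = Q := by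
    apply hAinj
    have hAP : A P = ∑ i, A (C (z i)) * a ^ (m i + l i) * (0:L) ^ (q - m i) * b ^ (l i) := by
      rw [hP, map_sum]
      refine Finset.sum_congr rfl fun i _ => ?_
      simp [map_mul, map_pow, ← ha_def, ← hb_def]
    have hAQ : A Q = a ^ (t + p) * b ^ w := by
      simp [hQ, map_mul, map_pow, ← ha_def, ← hb_def]
    rw [hAP, hAQ]
    have hQside : a ^ (t + p) * b ^ w = a ^ t * b ^ w * a ^ p := by
      rw [pow_add]; ring
    rw [hQside, ← hEq2, Finset.sum_mul]
    · refine Finset.sum_congr rfl fun i _ => ?_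
      have key : a⁻¹ ^ (p - l i) * a ^ p = a ^ (l i) := by
        have hpl : a ^ p = a ^ (p - l i) * a ^ (l i) := by
          rw [← pow_add]; congr 1; have := hl i; omega
        rw [hpl, inv_pow, ← mul_assoc, inv_mul_cancel₀ (pow_ne_zero _ ha), one_mul]
      calc A (C (z i)) * a ^ (m i + l i) * (0:L) ^ (q - m i) * b ^ (l i)
          = A (C (z i)) * a ^ (m i) * (0:L) ^ (q - m i) * b ^ (l i)
            * (a⁻¹ ^ (p - l i) * a ^ p) := by rw [key, pow_add]; ring
        _ = A (C (z i)) * a ^ (m i) * (0:L) ^ (q - m i) * b ^ (l i)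
            * a⁻¹ ^ (p - l i) * a ^ p := by ring
  -- now compare coefficients in R
  set d : (Fin 2) →₀ ℕ := Finsupp.single 0 (t + p) + Finsupp.single 1 w with hd
  have hcoeffQ : coeff d Q = 1 := by
    rw [hQ, X_pow_eq_monomial, X_pow_eq_monomial, monomial_mul, mul_one, hd,
      coeff_monomial, if_pos rfl]
  have hcoeffP : coeff d P ≠ 0 := by rw [hPQ, hcoeffQ]; exact one_ne_zero
  rw [hP, coeff_sum] at hcoeffP
  obtain ⟨i, _, hi⟩ := Finset.exists_ne_zero_of_sum_ne_zero hcoeffP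
  have hmi : m i = q := by
    by_contra hne
    have : (0:R) ^ (q - m i) = 0 := by
      apply zero_pow; have := hm i; omega
    rw [this] at hi
    simp at hi
  simp only [hmi, Nat.sub_self, pow_zero, mul_one, one_mul, X_pow_eq_monomial,
    C_mul_monomial] at hi
  rw [monomial_mul, mul_one, coeff_monomial] at hi
  split_ifs at hi with heq
  · have h0 := DFunLike.congr_fun heq (0 : Fin 2)
    have h1 := DFunLike.congr_fun heq (1 : Fin 2)
    simp [hd, Finsupp.single_apply] at h0 h1
    constructor
    · omega
    · rw [← h1]; exact hl i
  · exact absurd rfl hi
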